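/- Let λ_1 > λ_2 > … > λ_m > μ be real numbers, z_1,…,z_m nonzero reals with Σ_{i=1}^m z_i² < 1, and ρ > 0. Then the first-order truncated secular equation w_1(t;μ) = 1 + ρ(Σ_{i=1}^m z_i²/(λ_i − t) + (1 − Σ_{i=1}^m z_i²)/(μ − t)) has exactly one root in each interval (λ_j, λ_{j-1}) for 2 ≤ j ≤ m, and exactly one root in the interval (λ_1, λ_1 + ρ]. In particular it has at least m roots in (λ_m, λ_1 + ρ]. -/

import Mathlib

open BigOperators Filter Set Topology

private lemma div_lt_div_of_prod_pos {c x y : ℝ} (hc : 0 < c) (hxy : y < x) (h : 0 < x * y) :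
    c / x < c / y := by
  have hx : x ≠ 0 := fun hx => by simp [hx] at h
  have hy : y ≠ 0 := fun hy => by simp [hy] at h
  have key : c / x - c / y = c * (y - x) / (x * y) := by field_simp
  have : c * (y - x) / (x * y) < 0 := div_neg_of_neg_of_pos (by nlinarith) h
  linarith

theorem truncated_secular_roots
    (m : ℕ) (hm : 0 < m) (d : Fin m → ℝ) (hd : StrictAnti d)
    (μ : ℝ) (hμ : μ < d ⟨m - 1, by omega⟩)
    (z : Fin m → ℝ) (hz : ∀ i, z i ≠ 0) (hzsum : ∑ i, z i ^ 2 < 1)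
    (ρ : ℝ) (hρ : 0 < ρ)
    (w₁ : ℝ → ℝ)
    (hw₁ : w₁ = fun t =>
      1 + ρ * ((∑ i, z i ^ 2 / (d i - t)) + (1 - ∑ i, z i ^ 2) / (μ - t))) :
    (∀ j : Fin m, ∀ hj : 1 ≤ (j : ℕ),
      ∃! t : ℝ, t ∈ Set.Ioo (d j) (d ⟨(j : ℕ) - 1, by omega⟩) ∧ w₁ t = 0) ∧
    (∃! t : ℝ, t ∈ Set.Ioc (d ⟨0, hm⟩) (d ⟨0, hm⟩ + ρ) ∧ w₁ t = 0) ∧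
    (∃ t : Fin m → ℝ, Function.Injective t ∧
      ∀ i, t i ∈ Set.Ioc (d ⟨m - 1, by omega⟩) (d ⟨0, hm⟩ + ρ) ∧ w₁ (t i) = 0) := by
  have hz2 : ∀ i, 0 < z i ^ 2 := fun i => pow_two_pos_of_ne_zero (hz i)
  have hS1 : 0 < 1 - ∑ i, z i ^ 2 := by linarith
  have hdm : ∀ j : Fin m, d ⟨m - 1, by omega⟩ ≤ d j := by
    intro j
    apply hd.antitone
    have := j.isLt
    simp only [Fin.le_def]
    omega
  have hd0 : ∀ i, d i ≤ d ⟨0, hm⟩ := by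
    intro i
    apply hd.antitone
    simp [Fin.le_def]
  have hμj : ∀ j : Fin m, μ < d j := fun j => lt_of_lt_of_le hμ (hdm j)
  -- strict monotonicity off the poles
  have mono : ∀ t₁ t₂ : ℝ, t₁ < t₂ → (∀ i, 0 < (d i - t₁) * (d i - t₂)) →
      0 < (μ - t₁) * (μ - t₂) → w₁ t₁ < w₁ t₂ := by
    intro t₁ t₂ h12 hdp hμp
    rw [hw₁]
    simp only
    have hsum : ∑ i, z i ^ 2 / (d i - t₁) ≤ ∑ i, z i ^ 2 / (d i - t₂) :=
      Finset.sum_le_sum fun i _ =>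
        le_of_lt (div_lt_div_of_prod_pos (hz2 i) (by linarith) (hdp i))
    have hμt : (1 - ∑ i, z i ^ 2) / (μ - t₁) < (1 - ∑ i, z i ^ 2) / (μ - t₂) :=
      div_lt_div_of_prod_pos hS1 (by linarith) hμp
    have h := mul_lt_mul_of_pos_left
      (show (∑ i, z i ^ 2 / (d i - t₁)) + (1 - ∑ i, z i ^ 2) / (μ - t₁) <
        (∑ i, z i ^ 2 / (d i - t₂)) + (1 - ∑ i, z i ^ 2) / (μ - t₂) by linarith) hρ
    linarith
  -- continuity away from the poles
  have hcont : ∀ x y : ℝ, (∀ i, d i ∉ Set.Icc x y) → μ ∉ Set.Icc x y →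
      ContinuousOn w₁ (Set.Icc x y) := by
    intro x y hdI hμI
    rw [hw₁]
    refine continuousOn_const.add (continuousOn_const.mul (ContinuousOn.add ?_ ?_))
    · exact continuousOn_finset_sum _ fun i _ =>
        continuousOn_const.div (continuousOn_const.sub continuousOn_id)
          (fun t ht => sub_ne_zero.mpr fun h => hdI i (h ▸ ht))
    · exact continuousOn_const.div (continuousOn_const.sub continuousOn_id)
        (fun t ht => sub_ne_zero.mpr fun h => hμI (h ▸ ht))
  -- limits at the poles
  have hsub_gt : ∀ a : ℝ, Tendsto (fun t : ℝ => t - a) (𝓝[>] a) (𝓝[>] (0 : ℝ)) := by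
    intro a
    rw [tendsto_nhdsWithin_iff]
    constructor
    · have h : Tendsto (fun t : ℝ => t - a) (𝓝 a) (𝓝 (a - a)) :=
        tendsto_id.sub tendsto_const_nhds
      rw [sub_self] at h
      exact h.mono_left nhdsWithin_le_nhds
    · exact eventually_of_mem self_mem_nhdsWithin (fun t ht => Set.mem_Ioi.mpr (sub_pos.mpr ht))
  have hsub_lt : ∀ a : ℝ, Tendsto (fun t : ℝ => a - t) (𝓝[<] a) (𝓝[>] (0 : ℝ)) := by
    intro a
    rw [tendsto_nhdsWithin_iff]
    constructor
    · have h : Tendsto (fun t : ℝ => a - t) (𝓝 a) (𝓝 (a - a)) :=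
        tendsto_const_nhds.sub tendsto_id
      rw [sub_self] at h
      exact h.mono_left nhdsWithin_le_nhds
    · exact eventually_of_mem self_mem_nhdsWithin (fun t ht => Set.mem_Ioi.mpr (sub_pos.mpr ht))
  have hrest : ∀ j : Fin m,
      Tendsto (fun t => ∑ i ∈ Finset.univ.erase j, z i ^ 2 / (d i - t)) (𝓝 (d j))
        (𝓝 (∑ i ∈ Finset.univ.erase j, z i ^ 2 / (d i - d j))) := by
    intro j
    apply tendsto_finset_sum
    intro i hi
    have hne : d i - d j ≠ 0 :=
      sub_ne_zero.mpr fun h => (Finset.mem_erase.mp hi).1 (hd.injective h)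
    exact tendsto_const_nhds.div ((continuous_const.sub continuous_id).tendsto (d j)) hne
  have hμtend : ∀ j : Fin m,
      Tendsto (fun t => (1 - ∑ i, z i ^ 2) / (μ - t)) (𝓝 (d j))
        (𝓝 ((1 - ∑ i, z i ^ 2) / (μ - d j))) := by
    intro j
    have hne : μ - d j ≠ 0 := sub_ne_zero.mpr (ne_of_lt (hμj j))
    exact tendsto_const_nhds.div ((continuous_const.sub continuous_id).tendsto (d j)) hne
  have hbot : ∀ j : Fin m, Tendsto w₁ (𝓝[>] (d j)) atBot := by
    intro j
    have h1 : Tendsto (fun t : ℝ => (t - d j)⁻¹) (𝓝[>] (d j)) atTop :=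
      tendsto_inv_nhdsGT_zero.comp (hsub_gt (d j))
    have h2 : Tendsto (fun t : ℝ => -(t - d j)⁻¹) (𝓝[>] (d j)) atBot :=
      tendsto_neg_atTop_atBot.comp h1
    have hja : Tendsto (fun t => z j ^ 2 / (d j - t)) (𝓝[>] (d j)) atBot := by
      have h3 := h2.const_mul_atBot (hz2 j)
      refine h3.congr fun t => ?_
      rw [show d j - t = -(t - d j) by ring]
      rw [div_eq_mul_inv, inv_neg]
    have hsum : Tendsto (fun t => ∑ i, z i ^ 2 / (d i - t)) (𝓝[>] (d j)) atBot := by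
      have h4 := hja.atBot_add ((hrest j).mono_left nhdsWithin_le_nhds)
      refine h4.congr fun t => ?_
      exact Finset.add_sum_erase Finset.univ (fun i => z i ^ 2 / (d i - t)) (Finset.mem_univ j)
    have h5 := hsum.atBot_add ((hμtend j).mono_left nhdsWithin_le_nhds)
    have h6 := h5.const_mul_atBot hρ
    rw [hw₁]
    exact tendsto_atBot_add_const_left _ 1 h6
  have htop : ∀ j : Fin m, Tendsto w₁ (𝓝[<] (d j)) atTop := by
    intro j
    have h1 : Tendsto (fun t : ℝ => (d j - t)⁻¹) (𝓝[<] (d j)) atTop :=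
      tendsto_inv_nhdsGT_zero.comp (hsub_lt (d j))
    have hja : Tendsto (fun t => z j ^ 2 / (d j - t)) (𝓝[<] (d j)) atTop := by
      have h3 := h1.const_mul_atTop (hz2 j)
      refine h3.congr fun t => ?_
      rw [div_eq_mul_inv]
    have hsum : Tendsto (fun t => ∑ i, z i ^ 2 / (d i - t)) (𝓝[<] (d j)) atTop := by
      have h4 := hja.atTop_add ((hrest j).mono_left nhdsWithin_le_nhds)
      refine h4.congr fun t => ?_
      exact Finset.add_sum_erase Finset.univ (fun i => z i ^ 2 / (d i - t)) (Finset.mem_univ j)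
    have h5 := hsum.atTop_add ((hμtend j).mono_left nhdsWithin_le_nhds)
    have h6 := h5.const_mul_atTop hρ
    rw [hw₁]
    exact tendsto_atTop_add_const_left _ 1 h6
  -- points with negative / positive value near the poles
  have exneg : ∀ (j : Fin m) (b : ℝ), d j < b → ∃ x, x ∈ Set.Ioo (d j) b ∧ w₁ x < 0 := by
    intro j b hb
    have h1 : ∀ᶠ x in 𝓝[>] (d j), w₁ x < 0 := (hbot j).eventually (eventually_lt_atBot 0)
    have h2 : ∀ᶠ x in 𝓝[>] (d j), x ∈ Set.Ioo (d j) b :=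
      eventually_of_mem (Ioo_mem_nhdsGT_of_mem ⟨le_refl _, hb⟩) (fun x hx => hx)
    exact (h2.and h1).exists
  have expos : ∀ (j : Fin m) (a : ℝ), a < d j → ∃ x, x ∈ Set.Ioo a (d j) ∧ 0 < w₁ x := by
    intro j a ha
    have h1 : ∀ᶠ x in 𝓝[<] (d j), 0 < w₁ x := (htop j).eventually (eventually_gt_atTop 0)
    have h2 : ∀ᶠ x in 𝓝[<] (d j), x ∈ Set.Ioo a (d j) :=
      eventually_of_mem (Ioo_mem_nhdsLT_of_mem ⟨ha, le_refl _⟩) (fun x hx => hx)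
    exact (h2.and h1).exists
  -- IVT helper
  have ivt : ∀ x y : ℝ, x < y → w₁ x < 0 → 0 < w₁ y → (∀ i, d i ∉ Set.Icc x y) →
      μ ∉ Set.Icc x y → ∃ t ∈ Set.Ioo x y, w₁ t = 0 := by
    intro x y hxy hx hy hdI hμI
    have h := intermediate_value_Ioo (le_of_lt hxy) (hcont x y hdI hμI)
    obtain ⟨t, ht, htval⟩ := h ⟨hx, hy⟩
    exact ⟨t, ht, htval⟩
  -- uniqueness helper
  have uniq : ∀ (A : Set ℝ), (∀ u ∈ A, ∀ v ∈ A, u < v → w₁ u < w₁ v) →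
      ∀ s ∈ A, ∀ t ∈ A, w₁ s = 0 → w₁ t = 0 → s = t := by
    intro A hmono s hs t ht hs0 ht0
    rcases lt_trichotomy s t with h | h | h
    · have := hmono s hs t ht h; rw [hs0, ht0] at this; exact absurd this (lt_irrefl 0)
    · exact h
    · have := hmono t ht s hs h; rw [hs0, ht0] at this; exact absurd this (lt_irrefl 0)
  -- PART 1 : gaps
  have part1 : ∀ j : Fin m, ∀ hj : 1 ≤ (j : ℕ),
      ∃! t : ℝ, t ∈ Set.Ioo (d j) (d ⟨(j : ℕ) - 1, by omega⟩) ∧ w₁ t = 0 := by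
    intro j hj
    set j' : Fin m := ⟨(j : ℕ) - 1, by omega⟩ with hj'
    have hjj' : d j < d j' := hd (by simp only [Fin.lt_def, hj']; omega)
    have hside : ∀ i : Fin m, d i ≤ d j ∨ d j' ≤ d i := by
      intro i
      rcases le_or_gt (j : ℕ) (i : ℕ) with h | h
      · exact Or.inl (hd.antitone (by simp only [Fin.le_def]; omega))
      · exact Or.inr (hd.antitone (by simp only [Fin.le_def, hj']; omega))
    have hmonoA : ∀ u ∈ Set.Ioo (d j) (d j'), ∀ v ∈ Set.Ioo (d j) (d j'),
        u < v → w₁ u < w₁ v := by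
      intro u hu v hv huv
      apply mono u v huv
      · intro i
        rcases hside i with h | h
        · exact mul_pos_of_neg_of_neg (by cases hu; linarith) (by cases hv; linarith)
        · exact mul_pos (by cases hu; linarith) (by cases hv; linarith)
      · have := hμj j
        exact mul_pos_of_neg_of_neg (by cases hu; linarith) (by cases hv; linarith)
    obtain ⟨x, hx, hxneg⟩ := exneg j (d j') hjj'
    obtain ⟨y, hy, hypos⟩ := expos j' x hx.2
    have hIcc : Set.Icc x y ⊆ Set.Ioo (d j) (d j') := fun t ht =>
      ⟨lt_of_lt_of_le hx.1 ht.1, lt_of_le_of_lt ht.2 hy.2⟩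
    obtain ⟨t, ht, htval⟩ := ivt x y hy.1 hxneg hypos
      (fun i hin => by
        rcases hside i with h | h
        · exact absurd (hIcc hin).1 (not_lt.mpr h)
        · exact absurd (hIcc hin).2 (not_lt.mpr h))
      (fun hin => absurd (hIcc hin).1 (not_lt.mpr (le_of_lt (hμj j))))
    have htmem : t ∈ Set.Ioo (d j) (d j') := hIcc (Set.Ioo_subset_Icc_self ht)
    refine ⟨t, ⟨htmem, htval⟩, ?_⟩
    rintro s ⟨hs, hs0⟩
    exact uniq _ hmonoA s hs t htmem hs0 htval
  -- PART 2 : top interval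
  have hTpos : 0 < w₁ (d ⟨0, hm⟩ + ρ) := by
    rw [hw₁]
    simp only
    have hterm : ∀ i, -(z i ^ 2) / ρ ≤ z i ^ 2 / (d i - (d ⟨0, hm⟩ + ρ)) := by
      intro i
      have hx : d i - (d ⟨0, hm⟩ + ρ) ≤ -ρ := by have := hd0 i; linarith
      have e2 : z i ^ 2 / -ρ = -(z i ^ 2) / ρ := by rw [div_neg, neg_div]
      rcases eq_or_lt_of_le hx with heq | hlt
      · rw [← heq] at e2
        rw [← e2]
      · have h := div_lt_div_of_prod_pos (hz2 i) hlt
          (show 0 < -ρ * (d i - (d ⟨0, hm⟩ + ρ)) by nlinarith)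
        rw [e2] at h
        exact le_of_lt h
    have e : ∑ i, -(z i ^ 2) / ρ = -(∑ i, z i ^ 2) / ρ := by
      rw [← Finset.sum_div]
      congr 1
      exact Finset.sum_neg_distrib _
    have hsums : -(∑ i, z i ^ 2) / ρ ≤ ∑ i, z i ^ 2 / (d i - (d ⟨0, hm⟩ + ρ)) := by
      have h := Finset.sum_le_sum fun i (_ : i ∈ Finset.univ) => hterm i
      rw [e] at h
      exact h
    have hμx : μ - (d ⟨0, hm⟩ + ρ) < -ρ := by have := hμj ⟨0, hm⟩; linarith
    have hμterm : -(1 - ∑ i, z i ^ 2) / ρ < (1 - ∑ i, z i ^ 2) / (μ - (d ⟨0, hm⟩ + ρ)) := by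
      have e2 : (1 - ∑ i, z i ^ 2) / -ρ = -(1 - ∑ i, z i ^ 2) / ρ := by rw [div_neg, neg_div]
      have h := div_lt_div_of_prod_pos hS1 hμx
        (show 0 < -ρ * (μ - (d ⟨0, hm⟩ + ρ)) by nlinarith)
      rw [e2] at h
      exact h
    have h6 : -(1 / ρ) < (∑ i, z i ^ 2 / (d i - (d ⟨0, hm⟩ + ρ))) +
        (1 - ∑ i, z i ^ 2) / (μ - (d ⟨0, hm⟩ + ρ)) := by
      have e3 : -(∑ i, z i ^ 2) / ρ + -(1 - ∑ i, z i ^ 2) / ρ = -(1 / ρ) := by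
        rw [← add_div,
          show -(∑ i, z i ^ 2) + -(1 - ∑ i, z i ^ 2) = -1 by ring, neg_div]
      linarith
    have h7 := mul_lt_mul_of_pos_left h6 hρ
    have h8 : ρ * -(1 / ρ) = -1 := by
      rw [mul_neg, mul_one_div, div_self (ne_of_gt hρ)]
    linarith
  have part2 : ∃! t : ℝ, t ∈ Set.Ioc (d ⟨0, hm⟩) (d ⟨0, hm⟩ + ρ) ∧ w₁ t = 0 := by
    have hmonoA : ∀ u ∈ Set.Ioc (d ⟨0, hm⟩) (d ⟨0, hm⟩ + ρ),
        ∀ v ∈ Set.Ioc (d ⟨0, hm⟩) (d ⟨0, hm⟩ + ρ), u < v → w₁ u < w₁ v := by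
      intro u hu v hv huv
      apply mono u v huv
      · intro i
        have := hd0 i
        exact mul_pos_of_neg_of_neg (by cases hu; linarith) (by cases hv; linarith)
      · have := hμj ⟨0, hm⟩
        exact mul_pos_of_neg_of_neg (by cases hu; linarith) (by cases hv; linarith)
    obtain ⟨x, hx, hxneg⟩ := exneg ⟨0, hm⟩ (d ⟨0, hm⟩ + ρ) (by linarith)
    obtain ⟨t, ht, htval⟩ := ivt x (d ⟨0, hm⟩ + ρ) hx.2 hxneg hTpos
      (fun i hin => by have := hd0 i; have := hx.1; have := hin.1; linarith)
      (fun hin => by have := hμj ⟨0, hm⟩; have := hx.1; have := hin.1; linarith)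
    have htmem : t ∈ Set.Ioc (d ⟨0, hm⟩) (d ⟨0, hm⟩ + ρ) :=
      ⟨lt_trans hx.1 ht.1, le_of_lt ht.2⟩
    refine ⟨t, ⟨htmem, htval⟩, ?_⟩
    rintro s ⟨hs, hs0⟩
    exact uniq _ hmonoA s hs t htmem hs0 htval
  -- PART 3 : the m roots
  refine ⟨part1, part2, ?_⟩
  classical
  refine ⟨fun i => if h : 1 ≤ (i : ℕ) then ((part1 i h).exists).choose
    else (part2.exists).choose, ?_, ?_⟩
  · have hanti : StrictAnti (fun i : Fin m => if h : 1 ≤ (i : ℕ) then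
        ((part1 i h).exists).choose else (part2.exists).choose) := by
      intro i j hij
      have hj1 : 1 ≤ (j : ℕ) := by
        have := Fin.lt_def.mp hij
        omega
      have hspecj := ((part1 j hj1).exists).choose_spec
      simp only [dif_pos hj1]
      by_cases hi1 : 1 ≤ (i : ℕ)
      · have hspeci := ((part1 i hi1).exists).choose_spec
        rw [dif_pos hi1]
        have hle : d ⟨(j : ℕ) - 1, by omega⟩ ≤ d i := by
          apply hd.antitone
          simp only [Fin.le_def]
          have := Fin.lt_def.mp hij
          omega
        have h1 := hspecj.1.2
        have h2 := hspeci.1.1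
        linarith
      · have hspeci := (part2.exists).choose_spec
        rw [dif_neg hi1]
        have hle : d ⟨(j : ℕ) - 1, by omega⟩ ≤ d ⟨0, hm⟩ := by
          apply hd.antitone
          simp [Fin.le_def]
        have h1 := hspecj.1.2
        have h2 := hspeci.1.1
        linarith
    exact hanti.injective
  · intro i
    by_cases h : 1 ≤ (i : ℕ)
    · have hspec := ((part1 i h).exists).choose_spec
      simp only [dif_pos h]
      refine ⟨⟨?_, ?_⟩, hspec.2⟩
      · exact lt_of_le_of_lt (hdm i) hspec.1.1
      · have hle : d ⟨(i : ℕ) - 1, by omega⟩ ≤ d ⟨0, hm⟩ := by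
          apply hd.antitone
          simp [Fin.le_def]
        have := hspec.1.2
        linarith
    · have hspec := (part2.exists).choose_spec
      simp only [dif_neg h]
      refine ⟨⟨?_, hspec.1.2⟩, hspec.2⟩
      exact lt_of_le_of_lt (hdm ⟨0, hm⟩) hspec.1.1
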